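/- arXiv:1508.00280 — 6 statements merged into one kernel-verified Lean document; each statement's English description precedes it below -/
import Mathlib

section
/- Every finite undirected graph U is an induced subgraph of some graph U' that admits a faithful DAG (i.e., U' is a SMIG). -/
/-- `w` is an ancestor of `u` in the directed graph `R` (every node is its own ancestor). -/
def Ancestor {V : Type*} (R : V → V → Prop) (w u : V) : Prop :=
  Relation.ReflTransGen R w u

/-- `u` and `v` have a common ancestor in `R`. -/
def CommonAnc {V : Type*} (R : V → V → Prop) (u v : V) : Prop :=
  ∃ w, Ancestor R w u ∧ Ancestor R w v

/-- `R` is acyclic (a DAG): no directed cycle. -/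
def Acyclic {V : Type*} (R : V → V → Prop) : Prop :=
  ∀ v, ¬ Relation.TransGen R v v

/-- The DAG `R` is faithful to the undirected graph `U`: distinct nodes are
adjacent in `U` iff they have a common ancestor in `R`. -/
def Faithful {V : Type*} (R : V → V → Prop) (U : SimpleGraph V) : Prop :=
  ∀ u v, u ≠ v → (U.Adj u v ↔ CommonAnc R u v)

/-- Closed neighborhood of `v` in `U`. -/
def Bd {V : Type*} (U : SimpleGraph V) (v : V) : Set V :=
  insert v (U.neighborSet v)

/-- `v` is simplicial in `U`: its closed neighborhood is a clique. -/
def Simplicial {V : Type*} (U : SimpleGraph V) (v : V) : Prop :=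
  U.IsClique (Bd U v)

theorem stmt3 {V : Type u} [Fintype V] (U : SimpleGraph V) :
    ∃ (V' : Type u) (_ : Fintype V') (f : V ↪ V') (U' : SimpleGraph V'),
      (∀ a b : V, U.Adj a b ↔ U'.Adj (f a) (f b)) ∧
      ∃ R : V' → V' → Prop, Acyclic R ∧ Faithful R U' := by
  classical
  haveI : Fintype ↥U.edgeSet := Fintype.ofFinite _
  set V' := V ⊕ ↥U.edgeSet with hV'
  let R : V' → V' → Prop := fun x y =>
    match x, y with
    | Sum.inr e, Sum.inl v => v ∈ (e : Sym2 V)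
    | _, _ => False
  -- no step starts from `inl`
  have hinl : ∀ (x : V) (c : V'), R (Sum.inl x) c → False := by
    intro x c h
    cases c <;> exact h
  have hrtg_inl : ∀ (x : V) (w : V'), Relation.ReflTransGen R (Sum.inl x) w →
      w = Sum.inl x := by
    intro x w h
    rcases (Relation.ReflTransGen.cases_head h) with h | ⟨c, hc, _⟩
    · exact h.symm
    · exact absurd hc (hinl x c)
  -- characterization of ancestors
  have hanc : ∀ (w u : V'), Relation.ReflTransGen R w u → w = u ∨ R w u := by
    intro w u h
    rcases Relation.ReflTransGen.cases_head h with h | ⟨c, hc, hcu⟩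
    · exact Or.inl h
    · right
      cases w with
      | inl x => exact absurd hc (hinl x c)
      | inr e =>
        cases c with
        | inl y =>
          have := hrtg_inl y u hcu
          subst this
          exact hc
        | inr e' => exact absurd hc (fun h => h)
  have hsymm : ∀ u v : V', CommonAnc R u v → CommonAnc R v u := by
    rintro u v ⟨w, h1, h2⟩; exact ⟨w, h2, h1⟩
  let U' : SimpleGraph V' :=
    { Adj := fun x y => x ≠ y ∧ CommonAnc R x y
      symm := ⟨fun x y ⟨hne, h⟩ => ⟨hne.symm, hsymm x y h⟩⟩
      loopless := ⟨fun x ⟨hne, _⟩ => hne rfl⟩ }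
  refine ⟨V', inferInstance, ⟨Sum.inl, Sum.inl_injective⟩, U', ?_, R, ?_, ?_⟩
  · intro a b
    constructor
    · intro hab
      refine ⟨fun h => hab.ne (Sum.inl_injective h), ⟨Sum.inr ⟨s(a, b), hab⟩, ?_, ?_⟩⟩
      · exact Relation.ReflTransGen.single (by simp [R])
      · exact Relation.ReflTransGen.single (by simp [R])
    · rintro ⟨hne, w, hwa, hwb⟩
      have hne' : a ≠ b := fun h => hne (by rw [h])
      rcases hanc w _ hwa with rfl | hra
      · rcases hanc _ _ hwb with h | hrb
        · exact absurd h hne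
        · cases hrb
      · cases w with
        | inl x => exact (hinl x (Sum.inl a) hra).elim
        | inr e =>
          rcases hanc _ _ hwb with h | hrb
          · exact absurd h (by simp)
          · have ha : a ∈ (e : Sym2 V) := hra
            have hb : b ∈ (e : Sym2 V) := hrb
            have : (e : Sym2 V) = s(a, b) :=
              (Sym2.mem_and_mem_iff hne').mp ⟨ha, hb⟩
            have he := e.2
            rw [this] at he
            exact he
  · intro v hv
    rcases (Relation.TransGen.head'_iff).mp hv with ⟨c, hvc, hcv⟩
    cases v with
    | inl x => exact hinl x c hvc
    | inr e =>
      cases c with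
      | inl y =>
        have := hrtg_inl y _ hcv
        exact absurd this (by simp)
      | inr e' => exact hvc
  · intro u v hne
    exact ⟨fun h => h.2, fun h => ⟨hne, h⟩⟩
end

section
/- A graph U admits a faithful DAG on the same vertex set iff every edge of U is contained in a simplex (a maximal clique containing a simplicial vertex). -/
lemma mem_bd_iff {V : Type*} (U : SimpleGraph V) (s a : V) :
    a ∈ Bd U s ↔ a = s ∨ U.Adj s a := by
  simp [Bd, Set.mem_insert_iff, SimpleGraph.mem_neighborSet]

theorem stmt4 {V : Type*} [Fintype V] (U : SimpleGraph V) :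
    (∃ R : V → V → Prop, Acyclic R ∧ Faithful R U) ↔
      (∀ u v, U.Adj u v → ∃ s, Simplicial U s ∧ u ∈ Bd U s ∧ v ∈ Bd U s) := by
  constructor
  · rintro ⟨R, hA, hF⟩ u v huv
    haveI : IsIrrefl V (Relation.TransGen R) := ⟨hA⟩
    have hwf : WellFounded (Relation.TransGen R) :=
      Finite.wellFounded_of_trans_of_irrefl _
    obtain ⟨w, hwu, hwv⟩ := (hF u v huv.ne).mp huv
    obtain ⟨m, ⟨hmu, hmv⟩, hmin⟩ :=
      hwf.has_min {x | Ancestor R x u ∧ Ancestor R x v} ⟨w, hwu, hwv⟩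
    have hroot : ∀ x, Ancestor R x m → x = m := by
      intro x hx
      rcases Relation.reflTransGen_iff_eq_or_transGen.mp hx with h | h
      · exact h.symm
      · exact absurd h (hmin x ⟨h.to_reflTransGen.trans hmu, h.to_reflTransGen.trans hmv⟩)
    have hanc_adj : ∀ a, m ≠ a → Ancestor R m a → U.Adj m a := fun a hne h =>
      (hF m a hne).mpr ⟨m, Relation.ReflTransGen.refl, h⟩
    have hadj_anc : ∀ a, U.Adj m a → Ancestor R m a := by
      intro a ha
      obtain ⟨x, hxm, hxa⟩ := (hF m a ha.ne).mp ha
      have := hroot x hxm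
      subst this
      exact hxa
    have hmem : ∀ a, Ancestor R m a → a ∈ Bd U m := by
      intro a h
      rw [mem_bd_iff]
      by_cases hea : a = m
      · exact Or.inl hea
      · exact Or.inr (hanc_adj a (fun h' => hea h'.symm) h)
    refine ⟨m, ?_, hmem u hmu, hmem v hmv⟩
    intro a ha b hb hab
    rw [mem_bd_iff] at ha hb
    have hma : Ancestor R m a := by
      rcases ha with h | h
      · subst h; exact Relation.ReflTransGen.refl
      · exact hadj_anc a h
    have hmb : Ancestor R m b := by
      rcases hb with h | h
      · subst h; exact Relation.ReflTransGen.refl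
      · exact hadj_anc b h
    exact (hF a b hab).mpr ⟨m, hma, hmb⟩
  · intro hS
    classical
    set f : V → ℕ := fun x => (Fintype.equivFin V x : ℕ) with hf
    have hfinj : Function.Injective f := fun a b h =>
      (Fintype.equivFin V).injective (Fin.ext h)
    set R : V → V → Prop :=
      fun a b => Simplicial U a ∧ U.Adj a b ∧ (¬ Simplicial U b ∨ f b < f a) with hR
    have hM : ∀ a b, Relation.TransGen R a b → Simplicial U b → f b < f a := by
      intro a b h
      induction h with
      | single h => exact fun hb => h.2.2.resolve_left (not_not_intro hb)
      | tail h1 h2 ih =>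
          intro hb
          exact lt_trans (h2.2.2.resolve_left (not_not_intro hb)) (ih h2.1)
    have hAcy : Acyclic R := by
      intro v hv
      have hs : Simplicial U v := by
        obtain ⟨c, h, -⟩ := Relation.TransGen.head'_iff.mp hv
        exact h.1
      exact lt_irrefl _ (hM v v hv hs)
    refine ⟨R, hAcy, ?_⟩
    intro u v huv
    constructor
    · intro hadj
      obtain ⟨s, hsimp, hus, hvs⟩ := hS u v hadj
      set T : Set V := {x | x ∈ Bd U s ∧ Simplicial U x} with hT
      have hTne : T.Nonempty := ⟨s, by rw [mem_bd_iff]; exact Or.inl rfl, hsimp⟩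
      obtain ⟨m, hmT, hmax⟩ := Set.Finite.exists_maximalFor f T (Set.toFinite T) hTne
      have hstep : ∀ x, x ∈ Bd U s → Ancestor R m x := by
        intro x hx
        by_cases hxm : x = m
        · subst hxm; exact Relation.ReflTransGen.refl
        · refine Relation.ReflTransGen.single ⟨hmT.2, ?_, ?_⟩
          · exact hsimp hmT.1 hx (fun h => hxm h.symm)
          · by_cases hxs : Simplicial U x
            · refine Or.inr ?_
              by_contra hlt
              push_neg at hlt
              exact hxm (hfinj (le_antisymm hlt (hmax ⟨hx, hxs⟩ hlt)).symm)
            · exact Or.inl hxs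
      exact ⟨m, hstep u hus, hstep v hvs⟩
    · rintro ⟨w, hwu, hwv⟩
      have adj_of : ∀ a b : V, Relation.TransGen R a b → U.Adj a b := by
        intro a b h
        induction h using Relation.TransGen.head_induction_on with
        | single h => exact h.2.1
        | head h1 h2 ih =>
            rename_i a' c
            have hc : Simplicial U c := by
              obtain ⟨d, h, -⟩ := Relation.TransGen.head'_iff.mp h2
              exact h.1
            have hab : a' ≠ b := by
              rintro rfl
              exact hAcy a' (Relation.TransGen.head h1 h2)
            have hmemA : a' ∈ Bd U c := by
              rw [mem_bd_iff]; exact Or.inr h1.2.1.symm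
            have hmemB : b ∈ Bd U c := by
              rw [mem_bd_iff]; exact Or.inr ih
            exact hc hmemA hmemB hab
      rcases Relation.reflTransGen_iff_eq_or_transGen.mp hwu with h | hwtu
      · subst h
        rcases Relation.reflTransGen_iff_eq_or_transGen.mp hwv with h | hwtv
        · exact absurd h.symm huv
        · exact adj_of _ _ hwtv
      · rcases Relation.reflTransGen_iff_eq_or_transGen.mp hwv with h | hwtv
        · subst h
          exact (adj_of _ _ hwtu).symm
        · have hw : Simplicial U w := by
            obtain ⟨d, h, -⟩ := Relation.TransGen.head'_iff.mp hwtu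
            exact h.1
          have hu : u ∈ Bd U w := by rw [mem_bd_iff]; exact Or.inr (adj_of _ _ hwtu)
          have hv : v ∈ Bd U w := by rw [mem_bd_iff]; exact Or.inr (adj_of _ _ hwtv)
          exact hw hu hv huv
end

section
/- Every sink orientation of a graph U is transitively closed: if x → y and y → z are edges of a sink orientation, then so is x → z. -/
/-- `S` is a sink orientation of `U`: an acyclic orientation of all edges of `U`
in which an edge may point from `u` to `v` only if `Bd U u ⊆ Bd U v`. -/
def SinkOrientation {V : Type*} (U : SimpleGraph V) (S : V → V → Prop) : Prop :=
  Acyclic S ∧ (∀ u v, S u v → U.Adj u v) ∧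
    (∀ u v, U.Adj u v → (S u v ↔ ¬ S v u)) ∧
    (∀ u v, S u v → Bd U u ⊆ Bd U v)

theorem stmt8 {V : Type*} (U : SimpleGraph V) (S : V → V → Prop)
    (hS : SinkOrientation U S) (hfaith : Faithful S U)
    (x y z : V) (hxy : S x y) (hyz : S y z) : S x z := by
  obtain ⟨hacyc, hadj, hiff, hsub⟩ := hS
  have hxz_ne : x ≠ z := by
    rintro rfl
    exact hacyc x (Relation.TransGen.tail (Relation.TransGen.single hxy) hyz)
  have hxBd : x ∈ Bd U z := hsub y z hyz (hsub x y hxy (Set.mem_insert x _))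
  have hadjxz : U.Adj x z := by
    rcases hxBd with h | h
    · exact absurd h hxz_ne
    · exact (U.adj_symm h)
  by_contra hnxz
  have hzx : S z x := by
    by_contra hnzx
    exact hnxz ((hiff x z hadjxz).mpr hnzx)
  exact hacyc x (Relation.TransGen.tail
    (Relation.TransGen.tail (Relation.TransGen.single hxy) hyz) hzx)
end

section
/- Let U be a graph, let I be a set consisting of exactly one simplicial vertex per simplex of U such that every edge of U lies in some simplex, and let G be the DAG with edges i → j for each i ∈ I and each neighbor j of i in U. Then G is faithful to U. -/
theorem stmt10 {V : Type*} (U : SimpleGraph V) (I : Set V)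
    (hsimp : ∀ i ∈ I, Simplicial U i)
    (hindep : ∀ i ∈ I, ∀ j ∈ I, ¬ U.Adj i j)
    (hone : ∀ i ∈ I, ∀ j ∈ I, Bd U i = Bd U j → i = j)
    (hcover : ∀ u v, U.Adj u v → ∃ i ∈ I, u ∈ Bd U i ∧ v ∈ Bd U i) :
    Faithful (fun x y => x ∈ I ∧ U.Adj x y) U := by
  intro u v huv
  constructor
  · intro hadj
    obtain ⟨i, hi, hu, hv⟩ := hcover u v hadj
    refine ⟨i, ?_, ?_⟩
    · rcases hu with rfl | hu
      · exact Relation.ReflTransGen.refl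
      · exact Relation.ReflTransGen.single ⟨hi, hu⟩
    · rcases hv with rfl | hv
      · exact Relation.ReflTransGen.refl
      · exact Relation.ReflTransGen.single ⟨hi, hv⟩
  · rintro ⟨w, hwu, hwv⟩
    have key : ∀ x, Relation.ReflTransGen (fun x y => x ∈ I ∧ U.Adj x y) w x →
        w = x ∨ (w ∈ I ∧ U.Adj w x) := by
      intro x hx
      induction hx with
      | refl => exact Or.inl rfl
      | tail hab hbc ih =>
        rcases ih with rfl | ⟨hwI, hadj⟩
        · exact Or.inr hbc
        · exact absurd hadj (hindep w hwI _ hbc.1)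
    rcases key u hwu with rfl | ⟨hwI, hadjU⟩
    · rcases key v hwv with rfl | ⟨_, h⟩
      · exact absurd rfl huv
      · exact h
    · rcases key v hwv with rfl | ⟨_, h2⟩
      · exact hadjU.symm
      · have := hsimp w hwI
        exact this (Or.inr hadjU) (Or.inr h2) huv
end

section
/- The marginal independence graph of any DAG is edge-simplicial: every edge of the marginal independence graph of a DAG lies in a clique of the form Bd(v) for some simplicial vertex v. -/
theorem stmt12 {V : Type*} [Fintype V] (R : V → V → Prop) (U : SimpleGraph V)
    (hacyc : Acyclic R) (hfaith : Faithful R U) :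
    ∀ u v, U.Adj u v → ∃ s, Simplicial U s ∧ u ∈ Bd U s ∧ v ∈ Bd U s := by
  intro u v huv
  obtain ⟨w, hwu, hwv⟩ := (hfaith u v huv.ne).mp huv
  -- find a minimal ancestor s of w
  have hirr : IsIrrefl V (Relation.TransGen R) := ⟨hacyc⟩
  have htr : IsTrans V (Relation.TransGen R) := inferInstance
  have hwf : WellFounded (Relation.TransGen R) :=
    Finite.wellFounded_of_trans_of_irrefl _
  obtain ⟨s, hs, hmin⟩ := hwf.has_min {x | Ancestor R x w} ⟨w, Relation.ReflTransGen.refl⟩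
  -- s has no proper ancestor
  have hsrc : ∀ x, Ancestor R x s → x = s := by
    intro x hx
    rcases (Relation.reflTransGen_iff_eq_or_transGen.mp hx) with h | h
    · exact h.symm
    · exact absurd h (hmin x (Relation.ReflTransGen.trans hx hs))
  have hsu : Ancestor R s u := Relation.ReflTransGen.trans hs hwu
  have hsv : Ancestor R s v := Relation.ReflTransGen.trans hs hwv
  -- anything s is an ancestor of lies in Bd U s
  have hbd : ∀ a, Ancestor R s a → a ∈ Bd U s := by
    intro a ha
    by_cases h : a = s
    · exact h ▸ Set.mem_insert _ _
    · exact Set.mem_insert_of_mem _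
        ((hfaith s a (Ne.symm h)).mpr ⟨s, Relation.ReflTransGen.refl, ha⟩)
  -- members of Bd U s are descendants of s
  have hdesc : ∀ a, a ∈ Bd U s → Ancestor R s a := by
    intro a ha
    rcases ha with h | h
    · exact h ▸ Relation.ReflTransGen.refl
    · obtain ⟨x, hxs, hxa⟩ := (hfaith s a (SimpleGraph.Adj.ne h)).mp h
      exact (hsrc x hxs) ▸ hxa
  refine ⟨s, ?_, hbd u hsu, hbd v hsv⟩
  intro a ha b hb hab
  exact (hfaith a b hab).mpr ⟨s, hdesc a ha, hdesc b hb⟩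
end

section
/- If s is a source (no incoming edges) of a DAG G, then s is a simplicial vertex of the marginal independence graph of G. -/
theorem stmt13 {V : Type*} (R : V → V → Prop) (U : SimpleGraph V)
    (hacyc : Acyclic R) (hfaith : Faithful R U)
    (s : V) (hsource : ∀ x, ¬ R x s) :
    Simplicial U s := by
  have hanc : ∀ w, Ancestor R w s → w = s := by
    intro w hw
    cases (Relation.ReflTransGen.cases_tail hw) with
    | inl h => exact h.symm
    | inr h => exact absurd h.choose_spec.2 (hsource _)
  have hdesc : ∀ a, a ∈ Bd U s → Ancestor R s a := by
    intro a ha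
    rcases ha with rfl | ha
    · exact Relation.ReflTransGen.refl
    · have := ((hfaith s a (U.ne_of_adj ha)).mp ha)
      rcases this with ⟨w, hws, hwa⟩
      exact hanc w hws ▸ hwa
  intro a ha b hb hab
  exact (hfaith a b hab).mpr ⟨s, hdesc a ha, hdesc b hb⟩
end
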